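/- Two-sided bound of the power gap by the perturbed energy on D (upper half): with σ = 1+(k−1)χ_D and k>1, in the abstract setting one has (k−1)/k · ∫_D |∇u₀|² ≤ W₀ − W ≤ (k−1) ∫_D |∇u₀|². Abstractly: let H be a real inner product space, D a 'localization' given by a positive semidefinite symmetric bilinear form b on H, a₀(v,w)=⟨v,w⟩, a(v,w)=⟨v,w⟩+(k−1)b(v,w) with k>1, and u, u₀ as above; then ((k−1)/k)·b(u₀,u₀) ≤ a₀(u₀,u₀) − a(u,u) ≤ (k−1)·b(u₀,u₀). -/

import Mathlib

theorem power_gap_two_sided_bound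
    {H : Type*} [NormedAddCommGroup H] [InnerProductSpace ℝ H]
    (b : H →ₗ[ℝ] H →ₗ[ℝ] ℝ)
    (hbsym : ∀ v w, b v w = b w v)
    (hb : ∀ v, 0 ≤ b v v ∧ b v v ≤ inner ℝ v v)
    (k : ℝ) (hk : 1 < k)
    (a : H →ₗ[ℝ] H →ₗ[ℝ] ℝ)
    (ha : ∀ v w, a v w = inner ℝ v w + (k - 1) * b v w)
    (L : H →ₗ[ℝ] ℝ)
    (u u₀ : H)
    (hu₀ : ∀ v, (inner ℝ u₀ v : ℝ) = L v)
    (hu : ∀ v, a u v = L v) :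
    ((k - 1) / k) * b u₀ u₀ ≤ (inner ℝ u₀ u₀ : ℝ) - a u u ∧
    (inner ℝ u₀ u₀ : ℝ) - a u u ≤ (k - 1) * b u₀ u₀ := by
  set e := u₀ - u with he
  have hk0 : (0:ℝ) < k - 1 := by linarith
  have hkpos : (0:ℝ) < k := by linarith
  have hrep : ∀ v, (inner ℝ e v : ℝ) = (k - 1) * b u v := by
    intro v
    have h1 : (inner ℝ u v : ℝ) = a u v - (k - 1) * b u v := by rw [ha]; ring
    rw [he, inner_sub_left, hu₀, h1, hu]; ring
  have hee : (inner ℝ e e : ℝ) = (k - 1) * b u e := hrep e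
  have hβ : 0 ≤ b u e := by
    have := real_inner_self_nonneg (x := e)
    nlinarith [hee]
  have hbee0 : 0 ≤ b e e := (hb e).1
  have hbee : b e e ≤ (k - 1) * b u e := le_of_le_of_eq (hb e).2 hee
  have hbuu : 0 ≤ b u u := (hb u).1
  -- Cauchy–Schwarz for b
  have hCS : (b u e) ^ 2 ≤ b u u * b e e := by
    have hq : ∀ t : ℝ, 0 ≤ b e e * (t * t) + (2 * b u e) * t + b u u := by
      intro t
      have h := (hb (u + t • e)).1
      have hexp : b (u + t • e) (u + t • e)
          = b e e * (t * t) + (2 * b u e) * t + b u u := by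
        simp only [map_add, map_smul, LinearMap.add_apply, LinearMap.smul_apply,
          smul_eq_mul]
        rw [hbsym e u]
        ring
      linarith [hexp ▸ h]
    have hd := discrim_le_zero hq
    rw [discrim] at hd
    nlinarith [hd]
  -- β ≤ (k-1) * b u u
  have hβle : b u e ≤ (k - 1) * b u u := by
    rcases eq_or_lt_of_le hβ with h0 | hpos
    · rw [← h0]; positivity
    · nlinarith [hCS, hbee]
  -- gap identity
  have hu₀e : u₀ = u + e := by rw [he]; abel
  have hbu₀ : b u u₀ = b u u + b u e := by rw [hu₀e, map_add]
  have hb00 : b u₀ u₀ = b u u + 2 * b u e + b e e := by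
    rw [hu₀e]
    simp only [map_add, LinearMap.add_apply]
    rw [hbsym e u]; ring
  have hG : (inner ℝ u₀ u₀ : ℝ) - a u u = (k - 1) * (b u u + b u e) := by
    have h1 : (inner ℝ u₀ u₀ : ℝ) = a u u₀ := by rw [hu₀, hu]
    have h2 : a u u = (inner ℝ u₀ u : ℝ) := by rw [hu, hu₀]
    have h3 : a u u₀ = (inner ℝ u u₀ : ℝ) + (k - 1) * b u u₀ := ha u u₀
    rw [h1, h2, h3, real_inner_comm u u₀, hbu₀]; ring
  constructor
  · rw [hG, hb00, div_mul_eq_mul_div, div_le_iff₀ hkpos]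
    nlinarith [hbee, hβle, hβ, hbuu]
  · rw [hG, hb00]
    nlinarith [hβ, hbee0]
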